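/- Let A₁, A₂ be essentially small abelian categories and 0 → F' → F → F'' → 0 a short exact sequence of exact functors A₁ → A₂ (i.e. the sequence is exact when evaluated at every object). Then the induced sequence of ind-extensions 0 → Ind(F') → Ind(F) → Ind(F'') → 0 is a short exact sequence of functors Ind(A₁) → Ind(A₂). -/

import Mathlib

open CategoryTheory CategoryTheory.Limits

universe u

namespace IndSESHelper

open WalkingParallelPair WalkingParallelPairHom


variable {Q : Type*} [Category Q]

noncomputable def transportW {K K' : WalkingParallelPair ⥤ Q} (E : K ≅ K')
    {c : Cone K} {c' : Cone K'} (h : IsLimit c) (ept : c.pt ≅ c'.pt)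
    (hzero : c.π.app zero ≫ E.hom.app zero = ept.hom ≫ c'.π.app zero) : IsLimit c' :=
  (IsLimit.equivOfNatIsoOfIso E c c' (Cones.ext ept (by
    rintro (_ | _)
    · exact hzero
    · show c.π.app one ≫ E.hom.app one = ept.hom ≫ c'.π.app one
      rw [← c.w left, ← c'.w left, Category.assoc, E.hom.naturality left,
        ← Category.assoc, hzero, Category.assoc]))) h

lemma hasHomologyAny {C : Type*} [Category C] [Abelian C] (I : HasZeroMorphisms C)
    {X Y Z : C} (f : X ⟶ Y) (g : Y ⟶ Z)
    (h : f ≫ g = @OfNat.ofNat _ 0 (@Zero.toOfNat0 _ (@HasZeroMorphisms.zero C _ I X Z))) :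
    @ShortComplex.HasHomology C _ I (@ShortComplex.mk C _ I X Y Z f g h) := by
  obtain rfl := HasZeroMorphisms.ext I Preadditive.preadditiveHasZeroMorphisms
  infer_instance

lemma core {A₂ : Type u} [SmallCategory A₂] [Abelian A₂] [Abelian (Ind A₂)]
    {J : Type u} [SmallCategory J] [IsFiltered J]
    {G' G G'' : J ⥤ Ind A₂} (φ : G' ⟶ G) (ψ : G ⟶ G'')
    (hw : ∀ j, φ.app j ≫ ψ.app j = 0)
    (hepi : ∀ j, Epi (ψ.app j))
    (hker : ∀ j, IsLimit ((Ind.inclusion A₂).mapCone (KernelFork.ofι (φ.app j) (hw j))))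
    {c' : Cocone G'} {c : Cocone G} {c'' : Cocone G''}
    (hc' : IsColimit c') (hc : IsColimit c) (hc'' : IsColimit c'')
    (f : c'.pt ⟶ c.pt) (g : c.pt ⟶ c''.pt)
    (hf : ∀ j, c'.ι.app j ≫ f = φ.app j ≫ c.ι.app j)
    (hg : ∀ j, c.ι.app j ≫ g = ψ.app j ≫ c''.ι.app j)
    (hfg : f ≫ g = 0) :
    (ShortComplex.mk f g hfg).ShortExact := by
  let inc := Ind.inclusion A₂
  let φh : G' ⋙ inc ⟶ G ⋙ inc := Functor.whiskerRight φ inc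
  let ψh : G ⋙ inc ⟶ G'' ⋙ inc := Functor.whiskerRight ψ inc
  let zh : G ⋙ inc ⟶ G'' ⋙ inc := Functor.whiskerRight (0 : G ⟶ G'') inc
  have hcond : φh ≫ ψh = φh ≫ zh := by
    apply NatTrans.ext
    funext j
    show inc.map (φ.app j) ≫ inc.map (ψ.app j) =
      inc.map (φ.app j) ≫ inc.map ((0 : G ⟶ G'').app j)
    rw [← inc.map_comp, ← inc.map_comp, hw j, NatTrans.app_zero, comp_zero]
  let ForkL : Fork ψh zh := Fork.ofι φh hcond
  have hL : IsLimit ForkL := by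
    apply evaluationJointlyReflectsLimits
    intro j
    refine transportW (K := parallelPair (ψ.app j) (0 : G.obj j ⟶ G''.obj j) ⋙ inc)
      (K' := parallelPair ψh zh ⋙ (evaluation J (A₂ᵒᵖ ⥤ Type u)).obj j)
      (parallelPair.ext (Iso.refl _) (Iso.refl _) ?_ ?_) (hker j) (Iso.refl _) ?_
    · show inc.map (ψ.app j) ≫ 𝟙 _ = 𝟙 _ ≫ ψh.app j
      simp [ψh]
    · show inc.map (0 : G.obj j ⟶ G''.obj j) ≫ 𝟙 _ = 𝟙 _ ≫ zh.app j
      simp [zh]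
    · show inc.map (φ.app j) ≫ 𝟙 _ = 𝟙 _ ≫ φh.app j
      simp [φh]
  haveI h1 : PreservesLimitsOfShape WalkingParallelPair (colim : (J ⥤ Type u) ⥤ _) :=
    inferInstance
  haveI h2 : PreservesLimitsOfShape WalkingParallelPair
      (colim : (J ⥤ (A₂ᵒᵖ ⥤ Type u)) ⥤ _) := inferInstance
  have hColim : IsLimit (colim.mapCone ForkL) := isLimitOfPreserves colim hL
  let κ' : colimit (G' ⋙ inc) ≅ inc.obj c'.pt :=
    (colimit.isColimit (G' ⋙ inc)).coconePointUniqueUpToIso (isColimitOfPreserves inc hc')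
  let κ : colimit (G ⋙ inc) ≅ inc.obj c.pt :=
    (colimit.isColimit (G ⋙ inc)).coconePointUniqueUpToIso (isColimitOfPreserves inc hc)
  let κ'' : colimit (G'' ⋙ inc) ≅ inc.obj c''.pt :=
    (colimit.isColimit (G'' ⋙ inc)).coconePointUniqueUpToIso (isColimitOfPreserves inc hc'')
  have hκ' : ∀ j, colimit.ι (G' ⋙ inc) j ≫ κ'.hom = inc.map (c'.ι.app j) := fun j =>
    (colimit.isColimit (G' ⋙ inc)).comp_coconePointUniqueUpToIso_hom _ j
  have hκ : ∀ j, colimit.ι (G ⋙ inc) j ≫ κ.hom = inc.map (c.ι.app j) := fun j =>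
    (colimit.isColimit (G ⋙ inc)).comp_coconePointUniqueUpToIso_hom _ j
  have hκ'' : ∀ j, colimit.ι (G'' ⋙ inc) j ≫ κ''.hom = inc.map (c''.ι.app j) := fun j =>
    (colimit.isColimit (G'' ⋙ inc)).comp_coconePointUniqueUpToIso_hom _ j
  have hPre : IsLimit (inc.mapCone (KernelFork.ofι f hfg)) := by
    refine transportW (parallelPair.ext κ κ'' ?_ ?_) hColim κ' ?_
    · show colim.map ψh ≫ κ''.hom = κ.hom ≫ inc.map g
      apply colimit.hom_ext
      intro j
      rw [← Category.assoc, colimit.ι_map, Category.assoc, hκ'', ← Category.assoc, hκ]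
      show inc.map (ψ.app j) ≫ inc.map (c''.ι.app j) = inc.map (c.ι.app j) ≫ inc.map g
      rw [← inc.map_comp, ← inc.map_comp, hg j]
    · show colim.map zh ≫ κ''.hom = κ.hom ≫ inc.map (0 : c.pt ⟶ c''.pt)
      apply colimit.hom_ext
      intro j
      rw [← Category.assoc, colimit.ι_map, Category.assoc, hκ'', ← Category.assoc, hκ]
      show inc.map ((0 : G ⟶ G'').app j) ≫ inc.map (c''.ι.app j) =
        inc.map (c.ι.app j) ≫ inc.map (0 : c.pt ⟶ c''.pt)
      rw [← inc.map_comp, ← inc.map_comp, NatTrans.app_zero, zero_comp, comp_zero]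
    · show colim.map (ForkL.π.app zero) ≫ κ.hom = κ'.hom ≫ inc.map f
      apply colimit.hom_ext
      intro j
      show colimit.ι (G' ⋙ inc) j ≫ colim.map φh ≫ κ.hom =
        colimit.ι (G' ⋙ inc) j ≫ κ'.hom ≫ inc.map f
      rw [← Category.assoc, colimit.ι_map, Category.assoc, hκ, ← Category.assoc, hκ']
      show inc.map (φ.app j) ≫ inc.map (c.ι.app j) = inc.map (c'.ι.app j) ≫ inc.map f
      rw [← inc.map_comp, ← inc.map_comp, hf j]
  have hKf : IsLimit (KernelFork.ofι f hfg) := isLimitOfReflects inc hPre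
  have hm : Mono f := mono_of_isLimit_fork hKf
  haveI := hasHomologyAny _ f g hfg
  exact { exact := (ShortComplex.mk f g hfg).exact_of_f_is_kernel hKf,
          mono_f := hm,
          epi_g := ⟨fun {Z} u v huv => hc''.hom_ext fun j => by
            have := hepi j
            rw [← cancel_epi (ψ.app j), ← Category.assoc, ← hg j, ← Category.assoc, ← hg j,
              Category.assoc, Category.assoc, huv]⟩ }


lemma sq {A₂ : Type u} [SmallCategory A₂] {M₁ M₂ : A₂} (q : M₁ ⟶ M₂)
    {U V : Ind A₂} (a : U ≅ Ind.yoneda.obj M₁) (b : V ≅ Ind.yoneda.obj M₂)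
    (r : U ⟶ V) (hr : r ≫ b.hom = a.hom ≫ Ind.yoneda.map q) :
    yoneda.map q ≫
        ((Ind.yonedaCompInclusion.app M₂).symm ≪≫ ((Ind.inclusion A₂).mapIso b).symm).hom
      = ((Ind.yonedaCompInclusion.app M₁).symm ≪≫ ((Ind.inclusion A₂).mapIso a).symm).hom ≫
        (Ind.inclusion A₂).map r := by
  have hr' : r = a.hom ≫ Ind.yoneda.map q ≫ b.inv := by
    rw [← Category.assoc, ← hr, Category.assoc, Iso.hom_inv_id, Category.comp_id]
  have nat' : Ind.yonedaCompInclusion.inv.app M₁ ≫ (Ind.inclusion A₂).map (Ind.yoneda.map q)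
      = yoneda.map q ≫ Ind.yonedaCompInclusion.inv.app M₂ :=
    (Ind.yonedaCompInclusion.inv.naturality q).symm
  rw [hr']
  simp only [Iso.trans_hom, Iso.symm_hom, Iso.app_inv, Functor.mapIso_inv, Functor.map_comp]
  simp only [Category.assoc]
  rw [show (Ind.inclusion A₂).map a.inv ≫ (Ind.inclusion A₂).map a.hom ≫
      (Ind.inclusion A₂).map (Ind.yoneda.map q) ≫ (Ind.inclusion A₂).map b.inv
      = (Ind.inclusion A₂).map (Ind.yoneda.map q) ≫ (Ind.inclusion A₂).map b.inv from by
    rw [← Category.assoc, ← Functor.map_comp, Iso.inv_hom_id, CategoryTheory.Functor.map_id, Category.id_comp]]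
  rw [reassoc_of% nat']


end IndSESHelper

/-- Lemma 5.6: a short exact sequence `0 → F' → F → F'' → 0` of exact functors between
essentially small abelian categories induces, on the (filtered-colimit preserving)
ind-extensions, a sequence `0 → Ind F' → Ind F → Ind F'' → 0` of functors between the
ind-categories which is again short exact objectwise. -/
theorem stmt11 {A₁ A₂ : Type u} [SmallCategory A₁] [SmallCategory A₂] [Abelian A₁] [Abelian A₂]
    [Abelian (Ind A₂)] [(Ind.yoneda (C := A₂)).Additive]
    [PreservesFiniteLimits (Ind.yoneda (C := A₂))]
    [PreservesFiniteColimits (Ind.yoneda (C := A₂))]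
    (F' F F'' : A₁ ⥤ A₂)
    [F'.Additive] [PreservesFiniteLimits F'] [PreservesFiniteColimits F']
    [F.Additive] [PreservesFiniteLimits F] [PreservesFiniteColimits F]
    [F''.Additive] [PreservesFiniteLimits F''] [PreservesFiniteColimits F'']
    (α : F' ⟶ F) (β : F ⟶ F'')
    (w : ∀ M : A₁, α.app M ≫ β.app M = 0)
    (hse : ∀ M : A₁, (ShortComplex.mk (α.app M) (β.app M) (w M)).ShortExact)
    (IF' IF IF'' : Ind A₁ ⥤ Ind A₂)
    [PreservesFilteredColimits IF'] [PreservesFilteredColimits IF]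
    [PreservesFilteredColimits IF'']
    (eF' : (Ind.yoneda (C := A₁)) ⋙ IF' ≅ F' ⋙ (Ind.yoneda (C := A₂)))
    (eF : (Ind.yoneda (C := A₁)) ⋙ IF ≅ F ⋙ (Ind.yoneda (C := A₂)))
    (eF'' : (Ind.yoneda (C := A₁)) ⋙ IF'' ≅ F'' ⋙ (Ind.yoneda (C := A₂)))
    (Iα : IF' ⟶ IF) (Iβ : IF ⟶ IF'')
    (hIα : Functor.whiskerLeft (Ind.yoneda (C := A₁)) Iα ≫ eF.hom =
      eF'.hom ≫ Functor.whiskerRight α (Ind.yoneda (C := A₂)))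
    (hIβ : Functor.whiskerLeft (Ind.yoneda (C := A₁)) Iβ ≫ eF''.hom =
      eF.hom ≫ Functor.whiskerRight β (Ind.yoneda (C := A₂))) :
    ∀ X : Ind A₁, ∃ wI : Iα.app X ≫ Iβ.app X = 0,
      (ShortComplex.mk (Iα.app X) (Iβ.app X) wI).ShortExact := by
  intro X
  let J := X.presentation.I
  let D := X.presentation.F
  let Dy : J ⥤ Ind A₁ := D ⋙ Ind.yoneda
  let t : colimit Dy ≅ X := Ind.colimitPresentationCompYoneda X
  let cc : Cocone Dy :=
    { pt := X
      ι := { app := fun j => colimit.ι Dy j ≫ t.hom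
             naturality := fun i j u => by simp }}
  have hcc : IsColimit cc :=
    (colimit.isColimit Dy).ofIsoColimit (Cocones.ext t (fun j => rfl))
  have hα : ∀ M : A₁, Iα.app (Ind.yoneda.obj M) ≫ eF.hom.app M
      = eF'.hom.app M ≫ Ind.yoneda.map (α.app M) := fun M => by
    have h := congrArg (fun (n : (Ind.yoneda (C := A₁)) ⋙ IF' ⟶ F ⋙ Ind.yoneda) => n.app M) hIα
    simpa using h
  have hβ : ∀ M : A₁, Iβ.app (Ind.yoneda.obj M) ≫ eF''.hom.app M
      = eF.hom.app M ≫ Ind.yoneda.map (β.app M) := fun M => by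
    have h := congrArg (fun (n : (Ind.yoneda (C := A₁)) ⋙ IF ⟶ F'' ⋙ Ind.yoneda) => n.app M) hIβ
    simpa using h
  have hβ' : ∀ M : A₁, Iβ.app (Ind.yoneda.obj M)
      = eF.hom.app M ≫ Ind.yoneda.map (β.app M) ≫ eF''.inv.app M := fun M => by
    rw [← Category.assoc, ← hβ M, Category.assoc, Iso.hom_inv_id_app]
    simp
  have hα' : ∀ M : A₁, Iα.app (Ind.yoneda.obj M)
      = eF'.hom.app M ≫ Ind.yoneda.map (α.app M) ≫ eF.inv.app M := fun M => by
    rw [← Category.assoc, ← hα M, Category.assoc, Iso.hom_inv_id_app]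
    simp
  have w0 : ∀ M : A₁, Iα.app (Ind.yoneda.obj M) ≫ Iβ.app (Ind.yoneda.obj M) = 0 := fun M => by
    rw [hα' M, hβ' M]
    simp only [Category.assoc, Iso.inv_hom_id_app_assoc]
    rw [← Functor.map_comp_assoc, w M, Functor.map_zero, zero_comp, comp_zero]
  have hepiy : ∀ M : A₁, Epi (Iβ.app (Ind.yoneda.obj M)) := fun M => by
    rw [hβ' M]
    have h1 : Epi (β.app M) := (hse M).epi_g
    have h2 : Epi (Ind.yoneda.map (β.app M)) :=
      preserves_epi_of_preservesColimit Ind.yoneda (β.app M)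
    infer_instance
  have hkery : ∀ M : A₁, IsLimit ((Ind.inclusion A₂).mapCone
      (KernelFork.ofι (Iα.app (Ind.yoneda.obj M)) (w0 M))) := fun M => by
    have k0 : IsLimit (KernelFork.ofι (α.app M) (w M)) := (hse M).fIsKernel
    have ky : IsLimit (yoneda.mapCone (KernelFork.ofι (α.app M) (w M))) :=
      isLimitOfPreserves yoneda k0
    refine IndSESHelper.transportW (K := parallelPair (β.app M) 0 ⋙ yoneda)
      (K' := parallelPair (Iβ.app (Ind.yoneda.obj M)) 0 ⋙ Ind.inclusion A₂)
      (parallelPair.ext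
        ((Ind.yonedaCompInclusion.app (F.obj M)).symm ≪≫
          ((Ind.inclusion A₂).mapIso (eF.app M)).symm)
        ((Ind.yonedaCompInclusion.app (F''.obj M)).symm ≪≫
          ((Ind.inclusion A₂).mapIso (eF''.app M)).symm)
        ?_ ?_) ky
      ((Ind.yonedaCompInclusion.app (F'.obj M)).symm ≪≫
        ((Ind.inclusion A₂).mapIso (eF'.app M)).symm)
      ?_
    · exact IndSESHelper.sq (β.app M) (eF.app M) (eF''.app M) (Iβ.app _) (hβ M)
    · exact IndSESHelper.sq (0 : F.obj M ⟶ F''.obj M) (eF.app M) (eF''.app M) 0 (by simp)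
    · exact IndSESHelper.sq (α.app M) (eF'.app M) (eF.app M) (Iα.app _) (hα M)
  have hf : ∀ j, (IF'.mapCocone cc).ι.app j ≫ Iα.app X
      = (Functor.whiskerLeft Dy Iα).app j ≫ (IF.mapCocone cc).ι.app j :=
    fun j => Iα.naturality (cc.ι.app j)
  have hg : ∀ j, (IF.mapCocone cc).ι.app j ≫ Iβ.app X
      = (Functor.whiskerLeft Dy Iβ).app j ≫ (IF''.mapCocone cc).ι.app j :=
    fun j => Iβ.naturality (cc.ι.app j)
  have hc' : IsColimit (IF'.mapCocone cc) := isColimitOfPreserves IF' hcc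
  have hc : IsColimit (IF.mapCocone cc) := isColimitOfPreserves IF hcc
  have hc'' : IsColimit (IF''.mapCocone cc) := isColimitOfPreserves IF'' hcc
  have wI : Iα.app X ≫ Iβ.app X = 0 := by
    apply hc'.hom_ext
    intro j
    have h0 : (Functor.whiskerLeft Dy Iα).app j ≫ (Functor.whiskerLeft Dy Iβ).app j = 0 := w0 (D.obj j)
    rw [comp_zero, ← Category.assoc, hf j, Category.assoc, hg j, ← Category.assoc, h0, zero_comp]
  exact ⟨wI, IndSESHelper.core (Functor.whiskerLeft Dy Iα) (Functor.whiskerLeft Dy Iβ)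
    (fun j => w0 (D.obj j)) (fun j => hepiy (D.obj j)) (fun j => hkery (D.obj j))
    hc' hc hc'' (Iα.app X) (Iβ.app X) hf hg wI⟩
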